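/- Let I be a countable type, S : I → I → ℝ≥0 a stochastic matrix, i ∈ I, and j ∈ I a stationary state (S j j = 1). Call a path from i to j a finite sequence (i₁, …, i_k) of elements of I with k ≥ 1, i₁ = i, i_k = j, and i_k ≠ i_l for all l ∈ {1, …, k−1}; its weight is ∏_{l=1}^{k−1} S i_l i_{l+1}. Then ⨆_{n∈ℕ} (S^n) i j equals the sum, over all paths w from i to j, of the weight of w. -/

import Mathlib

open scoped NNReal ENNReal

/-- A stochastic matrix on a countable state space: each row sums to `1`. -/
def IsStochastic {I : Type*} (S : I → I → ℝ≥0) : Prop :=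
  ∀ i, ∑' j, (S i j : ℝ≥0∞) = 1

open Classical in
/-- Matrix powers: `S^0` is the identity and
`(S^{n+1}) i j = ∑' k, (S^n) i k * S k j`. -/
noncomputable def matPow {I : Type*} (S : I → I → ℝ≥0) : ℕ → I → I → ℝ≥0
  | 0 => fun i j => if i = j then 1 else 0
  | n + 1 => fun i j => (∑' k, (matPow S n i k : ℝ≥0∞) * (S k j : ℝ≥0∞)).toNNReal

/-- The weight of a path `(i_1, ..., i_k)`: the product of `S i_l i_(l+1)` over consecutive pairs. -/
noncomputable def pathWeight {I : Type*} (S : I → I → ℝ≥0) (l : List I) : ℝ≥0 :=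
  ((l.zip l.tail).map fun p => S p.1 p.2).prod

section Aux
variable {I : Type*} (S : I → I → ℝ≥0)

lemma S_le_one (hS : IsStochastic S) (i k : I) : (S i k : ℝ≥0∞) ≤ 1 := by
  rw [← hS i]; exact ENNReal.le_tsum k

open Classical in
lemma matPow_zero_coe (i k : I) :
    ((matPow S 0 i k : ℝ≥0∞)) = if i = k then 1 else 0 := by
  by_cases h : i = k <;> simp [matPow, h]

lemma matPow_rowsum (hS : IsStochastic S) : ∀ n, ∀ i, ∑' k, ((matPow S n i k : ℝ≥0∞)) = 1 := by
  intro n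
  induction n with
  | zero =>
    intro i
    simp only [matPow_zero_coe]
    rw [tsum_eq_single i] <;> simp +contextual [Ne.symm]
  | succ n ih =>
    intro i
    have hne : ∀ k, (∑' m, (matPow S n i m : ℝ≥0∞) * (S m k : ℝ≥0∞)) ≠ ⊤ := by
      intro k
      refine ne_top_of_le_ne_top ENNReal.one_ne_top ?_
      calc ∑' m, (matPow S n i m : ℝ≥0∞) * (S m k : ℝ≥0∞)
          ≤ ∑' m, (matPow S n i m : ℝ≥0∞) * 1 :=
            ENNReal.tsum_le_tsum fun m => mul_le_mul_right (S_le_one S hS m k) _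
        _ = 1 := by simpa using ih i
    have hc : ∀ k, ((matPow S (n+1) i k : ℝ≥0∞))
        = ∑' m, (matPow S n i m : ℝ≥0∞) * (S m k : ℝ≥0∞) := by
      intro k
      show ((∑' m, (matPow S n i m : ℝ≥0∞) * (S m k : ℝ≥0∞)).toNNReal : ℝ≥0∞) = _
      exact ENNReal.coe_toNNReal (hne k)
    simp only [hc]
    rw [ENNReal.tsum_comm]
    calc ∑' m, ∑' k, (matPow S n i m : ℝ≥0∞) * (S m k : ℝ≥0∞)
        = ∑' m, (matPow S n i m : ℝ≥0∞) * ∑' k, (S m k : ℝ≥0∞) :=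
          tsum_congr fun m => ENNReal.tsum_mul_left
      _ = ∑' m, (matPow S n i m : ℝ≥0∞) * 1 := tsum_congr fun m => by rw [hS m]
      _ = 1 := by simpa using ih i

lemma matPow_succ_coe (hS : IsStochastic S) (n : ℕ) (i k : I) :
    ((matPow S (n+1) i k : ℝ≥0∞)) = ∑' m, (matPow S n i m : ℝ≥0∞) * (S m k : ℝ≥0∞) := by
  have hne : (∑' m, (matPow S n i m : ℝ≥0∞) * (S m k : ℝ≥0∞)) ≠ ⊤ := by
    refine ne_top_of_le_ne_top ENNReal.one_ne_top ?_
    calc ∑' m, (matPow S n i m : ℝ≥0∞) * (S m k : ℝ≥0∞)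
        ≤ ∑' m, (matPow S n i m : ℝ≥0∞) * 1 :=
          ENNReal.tsum_le_tsum fun m => mul_le_mul_right (S_le_one S hS m k) _
      _ = 1 := by simpa using matPow_rowsum S hS n i
  exact ENNReal.coe_toNNReal hne

lemma matPow_succ_coe' (hS : IsStochastic S) : ∀ n, ∀ i k : I,
    ((matPow S (n+1) i k : ℝ≥0∞)) = ∑' m, (S i m : ℝ≥0∞) * (matPow S n m k : ℝ≥0∞) := by
  intro n
  induction n with
  | zero =>
    intro i k
    rw [matPow_succ_coe S hS]
    simp only [matPow_zero_coe]
    rw [tsum_eq_single i (by intro m hm; simp [Ne.symm hm])]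
    rw [tsum_eq_single k (by intro m hm; simp [hm])]
    simp
  | succ n ih =>
    intro i k
    calc ((matPow S (n+2) i k : ℝ≥0∞))
        = ∑' m, (matPow S (n+1) i m : ℝ≥0∞) * (S m k : ℝ≥0∞) := matPow_succ_coe S hS _ _ _
      _ = ∑' m, (∑' p, (S i p : ℝ≥0∞) * (matPow S n p m : ℝ≥0∞)) * (S m k : ℝ≥0∞) := by
          simp only [ih]
      _ = ∑' m, ∑' p, (S i p : ℝ≥0∞) * ((matPow S n p m : ℝ≥0∞) * (S m k : ℝ≥0∞)) :=
          tsum_congr fun m => by rw [← ENNReal.tsum_mul_right]; exact tsum_congr fun p => mul_assoc _ _ _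
      _ = ∑' p, ∑' m, (S i p : ℝ≥0∞) * ((matPow S n p m : ℝ≥0∞) * (S m k : ℝ≥0∞)) :=
          ENNReal.tsum_comm
      _ = ∑' p, (S i p : ℝ≥0∞) * ∑' m, (matPow S n p m : ℝ≥0∞) * (S m k : ℝ≥0∞) :=
          tsum_congr fun p => ENNReal.tsum_mul_left
      _ = ∑' p, (S i p : ℝ≥0∞) * (matPow S (n+1) p k : ℝ≥0∞) := by
          simp only [← matPow_succ_coe S hS]

end Aux

section Main
variable {I : Type*} (S : I → I → ℝ≥0) (j : I)

lemma S_stat (hS : IsStochastic S) (hj : S j j = 1) {k : I} (hk : k ≠ j) : S j k = 0 := by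
  classical
  have h := hS j
  rw [ENNReal.tsum_eq_add_tsum_ite j] at h
  rw [hj] at h
  have h1 : (1 : ℝ≥0∞) + ∑' x, ite (x = j) 0 ((S j x : ℝ≥0∞)) = 1 + 0 := by simpa using h
  have h2 := (ENNReal.add_right_inj ENNReal.one_ne_top).mp h1
  have h3 := ENNReal.tsum_eq_zero.mp h2 k
  rw [if_neg hk] at h3
  exact_mod_cast h3

lemma matPow_stat (hS : IsStochastic S) (hj : S j j = 1) : ∀ n, (matPow S n j j : ℝ≥0∞) = 1 := by
  intro n
  induction n with
  | zero => simp [matPow_zero_coe]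
  | succ n ih =>
    rw [matPow_succ_coe' S hS]
    rw [tsum_eq_single j (by intro m hm; simp [S_stat S j hS hj hm])]
    rw [ih, hj]; simp

end Main

section Paths
variable {I : Type*} (S : I → I → ℝ≥0) (j : I)

lemma pathWeight_singleton (a : I) : pathWeight S [a] = 1 := by simp [pathWeight]

lemma pathWeight_cons (a b : I) (t : List I) :
    pathWeight S (a :: b :: t) = S a b * pathWeight S (b :: t) := by
  simp [pathWeight]

open Classical in
noncomputable def Hfun (n : ℕ) (l : List I) : ℝ≥0∞ :=
  if l.getLast? = some j ∧ j ∉ l.dropLast ∧ l.length = n + 1 then pathWeight S l else 0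

open Classical in
noncomputable def Ffun (n : ℕ) (i : I) (l : List I) : ℝ≥0∞ :=
  if l.head? = some i then Hfun S j n l else 0

noncomputable def gfun (n : ℕ) (i : I) : ℝ≥0∞ := ∑' l, Ffun S j n i l

open Classical in
lemma gfun_zero (i : I) : gfun S j 0 i = if i = j then 1 else 0 := by
  have key : ∀ l, l ≠ [i] → Ffun S j 0 i l = 0 := by
    intro l hl
    rcases l with _ | ⟨a, _ | ⟨b, t⟩⟩
    · simp [Ffun]
    · by_cases h : a = i
      · subst h; exact absurd rfl hl
      · simp [Ffun, h]
    · simp [Ffun, Hfun]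
  rw [gfun, tsum_eq_single [i] key]
  by_cases h : i = j
  · subst h; simp [Ffun, Hfun, pathWeight_singleton]
  · simp [Ffun, Hfun, h, Ne.symm h]

lemma gfun_succ_j (n : ℕ) : gfun S j (n + 1) j = 0 := by
  rw [gfun, ENNReal.tsum_eq_zero]
  intro l
  rcases l with _ | ⟨a, _ | ⟨b, t⟩⟩
  · simp [Ffun]
  · simp only [Ffun, Hfun]; split_ifs with h1 h2 <;> first | rfl | simp at h2
  · simp only [Ffun, Hfun]
    split_ifs with h1 h2
    · exfalso
      have ha : a = j := by simpa using h1
      subst ha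
      exact h2.2.1 (by simp)
    · rfl
    · rfl

lemma gfun_succ (hS : IsStochastic S) {i : I} (hi : i ≠ j) (n : ℕ) :
    gfun S j (n + 1) i = ∑' k, (S i k : ℝ≥0∞) * gfun S j n k := by
  classical
  -- RHS as a sum over lists
  have hrhs : ∑' k, (S i k : ℝ≥0∞) * gfun S j n k
      = ∑' l : List I, (match l with
          | [] => 0
          | a :: t => (S i a : ℝ≥0∞) * Hfun S j n (a :: t)) := by
    calc ∑' k, (S i k : ℝ≥0∞) * gfun S j n k
        = ∑' k, ∑' l, (S i k : ℝ≥0∞) * Ffun S j n k l := by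
          simp only [gfun, ENNReal.tsum_mul_left]
      _ = ∑' l, ∑' k, (S i k : ℝ≥0∞) * Ffun S j n k l := ENNReal.tsum_comm
      _ = _ := by
          refine tsum_congr fun l => ?_
          rcases l with _ | ⟨a, t⟩
          · simp [Ffun]
          · rw [tsum_eq_single a]
            · simp [Ffun]
            · intro k hk
              simp [Ffun, Ne.symm hk]
  rw [hrhs]
  -- LHS: reindex by `cons i`
  have hsupp : Function.support (Ffun S j (n + 1) i) ⊆ Set.range (List.cons i) := by
    intro l hl
    rcases l with _ | ⟨a, t⟩
    · simp [Ffun] at hl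
    · have ha : a = i := by
        by_contra h
        simp [Ffun, h] at hl
      exact ⟨t, by rw [ha]⟩
  have hinj : Function.Injective (List.cons i) := fun a b h => by injection h
  rw [gfun, ← hinj.tsum_eq hsupp]
  refine tsum_congr fun t => ?_
  rcases t with _ | ⟨a, t'⟩
  · simp [Ffun, Hfun]
  · simp only [Ffun, Hfun, List.head?_cons, if_pos rfl]
    have hlast : (i :: a :: t').getLast? = (a :: t').getLast? := List.getLast?_cons_cons ..
    have hdrop : (i :: a :: t').dropLast = i :: (a :: t').dropLast := rfl
    rw [hlast, hdrop]
    have hmem : j ∉ i :: (a :: t').dropLast ↔ j ∉ (a :: t').dropLast := by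
      simp [Ne.symm hi]
    have hlen : (i :: a :: t').length = n + 1 + 1 ↔ (a :: t').length = n + 1 := by simp
    by_cases hc : (a :: t').getLast? = some j ∧ j ∉ (a :: t').dropLast ∧ (a :: t').length = n + 1
    · have hc' : (a :: t').getLast? = some j ∧ j ∉ i :: (a :: t').dropLast ∧
          (i :: a :: t').length = n + 1 + 1 := ⟨hc.1, hmem.mpr hc.2.1, hlen.mpr hc.2.2⟩
      rw [if_pos hc', if_pos hc, pathWeight_cons, ENNReal.coe_mul]
      simp
    · have hc' : ¬((a :: t').getLast? = some j ∧ j ∉ i :: (a :: t').dropLast ∧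
          (i :: a :: t').length = n + 1 + 1) := fun h => hc ⟨h.1, hmem.mp h.2.1, hlen.mp h.2.2⟩
      rw [if_neg hc', if_neg hc, mul_zero]
      simp

end Paths

lemma matPow_eq_sum_g {I : Type*} (S : I → I → ℝ≥0) (j : I)
    (hS : IsStochastic S) (hj : S j j = 1) :
    ∀ n, ∀ i, (matPow S n i j : ℝ≥0∞) = ∑ m ∈ Finset.range (n + 1), gfun S j m i := by
  intro n
  induction n with
  | zero => intro i; simp [matPow_zero_coe, gfun_zero]
  | succ n ih =>
    intro i
    by_cases h : i = j
    · rw [h, matPow_stat S j hS hj]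
      rw [Finset.sum_eq_single 0]
      · simp [gfun_zero]
      · intro b _ hb
        obtain ⟨m, rfl⟩ := Nat.exists_eq_succ_of_ne_zero hb
        exact gfun_succ_j S j m
      · intro h0; exact absurd (Finset.mem_range.mpr (Nat.succ_pos _)) h0
    · rw [matPow_succ_coe' S hS]
      calc ∑' k, (S i k : ℝ≥0∞) * (matPow S n k j : ℝ≥0∞)
          = ∑' k, ∑ m ∈ Finset.range (n + 1), (S i k : ℝ≥0∞) * gfun S j m k := by
            refine tsum_congr fun k => ?_
            rw [ih k, Finset.mul_sum]
        _ = ∑ m ∈ Finset.range (n + 1), ∑' k, (S i k : ℝ≥0∞) * gfun S j m k := by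
            rw [Summable.tsum_finsetSum fun _ _ => ENNReal.summable]
        _ = ∑ m ∈ Finset.range (n + 1), gfun S j (m + 1) i := by
            refine Finset.sum_congr rfl fun m _ => (gfun_succ S j hS h m).symm
        _ = ∑ m ∈ Finset.range (n + 2), gfun S j m i := by
            rw [Finset.sum_range_succ' (fun m => gfun S j m i) (n + 1)]
            simp [gfun_zero, h]

theorem limit_matrix_eq_sum_paths {I : Type*} [Countable I] (S : I → I → ℝ≥0)
    (hS : IsStochastic S) (i j : I) (hj : S j j = 1) :
    (⨆ n : ℕ, (matPow S n i j : ℝ≥0∞)) =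
      ∑' l : {l : List I // l.head? = some i ∧ l.getLast? = some j ∧ j ∉ l.dropLast},
        (pathWeight S (l : List I) : ℝ≥0∞) := by
  classical
  have h1 : (⨆ n : ℕ, (matPow S n i j : ℝ≥0∞)) = ∑' m, gfun S j m i := by
    rw [ENNReal.tsum_eq_iSup_sum' (fun n => Finset.range (n + 1)) ?_]
    · exact iSup_congr fun n => matPow_eq_sum_g S j hS hj n i
    · intro t
      obtain ⟨n, hn⟩ := t.exists_nat_subset_range
      exact ⟨n, hn.trans (Finset.range_subset_range.mpr (Nat.le_succ n))⟩
  have h2 : ∑' m, gfun S j m i = ∑' l : List I,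
      (if l.head? = some i ∧ l.getLast? = some j ∧ j ∉ l.dropLast
        then (pathWeight S l : ℝ≥0∞) else 0) := by
    rw [show (∑' m, gfun S j m i) = ∑' m, ∑' l, Ffun S j m i l from rfl, ENNReal.tsum_comm]
    refine tsum_congr fun l => ?_
    by_cases hP : l.head? = some i ∧ l.getLast? = some j ∧ j ∉ l.dropLast
    · rw [if_pos hP]
      have hne : l ≠ [] := by intro h; rw [h] at hP; simp at hP
      have hlen : l.length - 1 + 1 = l.length :=
        Nat.succ_pred_eq_of_pos (List.length_pos_iff.mpr hne)
      rw [tsum_eq_single (l.length - 1)]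
      · simp [Ffun, Hfun, hP.1, hP.2.1, hP.2.2, hlen]
      · intro m hm
        simp only [Ffun, Hfun]
        split_ifs with ha hb
        · exfalso
          obtain ⟨-, -, hl2⟩ := hb
          exact hm (by omega)
        · rfl
        · rfl
    · rw [if_neg hP]
      refine ENNReal.tsum_eq_zero.mpr fun m => ?_
      simp only [Ffun, Hfun]
      split_ifs with ha hb
      · exact absurd ⟨ha, hb.1, hb.2.1⟩ hP
      · rfl
      · rfl
  rw [h1, h2]
  refine Eq.trans ?_ (tsum_subtype
    {l : List I | l.head? = some i ∧ l.getLast? = some j ∧ j ∉ l.dropLast}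
    (fun l => (pathWeight S l : ℝ≥0∞))).symm
  refine tsum_congr fun l => ?_
  by_cases hP : l.head? = some i ∧ l.getLast? = some j ∧ j ∉ l.dropLast <;>
    simp [Set.indicator_apply, hP]
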